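/- Let σ and τ be protagonist strategies in an initialized generalised safety/reachability game with initial vertex v₀. If σ is preadmissible and σ ⪯ τ, then aVal(v₀, σ) = aVal(v₀, τ) and cVal(v₀, σ) = cVal(v₀, τ). -/

import Mathlib

open scoped Classical

/-- A generalised safety/reachability game: a finite directed graph where every vertex has a
successor, a set `protag` of protagonist vertices (the rest belong to the antagonist), a set
`leaf` of leaves (each equipped with exactly a self-loop), an integer payoff attached to each
leaf, and an initial vertex `v0`. -/
structure GSRGame where
  V : Type
  fin : Finite V
  E : V → V → Prop
  succ_exists : ∀ v : V, ∃ w : V, E v w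
  protag : V → Prop
  leaf : V → Prop
  leaf_loop : ∀ v w : V, leaf v → (E v w ↔ w = v)
  pay : V → ℤ
  v0 : V

namespace GSRGame

variable (g : GSRGame)

/-- A strategy: to each nonempty history it assigns a successor of the last vertex.
(A protagonist strategy is only ever consulted at histories ending in a protagonist vertex,
an antagonist strategy at histories ending in an antagonist vertex.) -/
structure Strat where
  act : List g.V → g.V
  valid : ∀ (h : List g.V) (hne : h ≠ []), g.E (h.getLast hne) (act h)

/-- One step of the play extending history `h`: the protagonist moves according to `σ` at
protagonist vertices, the antagonist according to `τ` elsewhere. -/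
noncomputable def step (σ τ : g.Strat) (h : List g.V) : List g.V :=
  h ++ [if g.protag (h.getLastD g.v0) then σ.act h else τ.act h]

/-- The history obtained after `k` steps of play by `(σ, τ)` extending `h`. -/
noncomputable def playList (σ τ : g.Strat) (h : List g.V) : ℕ → List g.V
  | 0 => h
  | k + 1 => g.step σ τ (playList σ τ h k)

/-- The outcome (infinite path) induced by `(σ, τ)` from the history `h`. -/
noncomputable def play (σ τ : g.Strat) (h : List g.V) (k : ℕ) : g.V :=
  (g.playList σ τ h k).getLastD g.v0

/-- The payoff of an outcome: the payoff of the leaf it reaches, and `0` if it reaches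
no leaf. -/
noncomputable def payoffOf (ρ : ℕ → g.V) : ℤ :=
  if hx : ∃ k : ℕ, g.leaf (ρ k) then g.pay (ρ (Nat.find hx)) else 0

/-- The payoff `p(h, σ, τ)` of the outcome induced by `(σ, τ)` from the history `h`. -/
noncomputable def pval (σ τ : g.Strat) (h : List g.V) : ℤ :=
  g.payoffOf (g.play σ τ h)

/-- `h` is a history (a nonempty path starting at `v0`) compatible with the protagonist
strategy `σ`: every protagonist move along `h` agrees with `σ`. -/
def Compat (σ : g.Strat) (h : List g.V) : Prop :=
  h ≠ [] ∧ h.head? = some g.v0 ∧ List.Chain' g.E h ∧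
    ∀ (p : List g.V) (v : g.V), (p ++ [v]) <+: h → p ≠ [] →
      g.protag (p.getLastD g.v0) → σ.act p = v

/-- The cooperative value `cVal(h, σ)`. -/
noncomputable def cVal (σ : g.Strat) (h : List g.V) : ℤ :=
  sSup {z : ℤ | ∃ τ : g.Strat, z = g.pval σ τ h}

/-- The antagonistic value `aVal(h, σ)`. -/
noncomputable def aVal (σ : g.Strat) (h : List g.V) : ℤ :=
  sInf {z : ℤ | ∃ τ : g.Strat, z = g.pval σ τ h}

/-- The antagonistic value `aVal(h)` of a history. -/
noncomputable def aValH (h : List g.V) : ℤ :=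
  sSup {z : ℤ | ∃ σ : g.Strat, z = g.aVal σ h}

/-- The antagonistic-cooperative value `acVal(h)` of a history. -/
noncomputable def acVal (h : List g.V) : ℤ :=
  sSup {z : ℤ | ∃ σ : g.Strat, g.aValH h ≤ g.aVal σ h ∧ z = g.cVal σ h}

/-- Weak dominance `σ ⪯ σ'` (from the initial vertex `v0`). -/
def Dom (σ σ' : g.Strat) : Prop :=
  ∀ τ : g.Strat, g.pval σ τ [g.v0] ≤ g.pval σ' τ [g.v0]

/-- Dominance `σ ≺ σ'`. -/
def SDom (σ σ' : g.Strat) : Prop :=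
  g.Dom σ σ' ∧ ∃ τ : g.Strat, g.pval σ τ [g.v0] < g.pval σ' τ [g.v0]

/-- Admissibility: `σ` is dominated by no strategy. -/
def Admissible (σ : g.Strat) : Prop := ¬ ∃ σ' : g.Strat, g.SDom σ σ'

/-- `h` is a witness of non-dominance of `σ₁` by `σ₂`. -/
def NonDomWitness (σ₁ σ₂ : g.Strat) (h : List g.V) : Prop :=
  g.Compat σ₁ h ∧ g.Compat σ₂ h ∧ g.protag (h.getLastD g.v0) ∧
    σ₁.act h ≠ σ₂.act h ∧ g.aVal σ₂ h < g.cVal σ₁ h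

/-- `h` is a witness of non-admissibility of `σ`. -/
def NonAdmWitness (σ : g.Strat) (h : List g.V) : Prop :=
  g.Compat σ h ∧
    g.aVal σ h ≤ g.cVal σ h ∧ g.cVal σ h ≤ g.aValH h ∧ g.aValH h ≤ g.acVal h ∧
    (g.aVal σ h < g.cVal σ h ∨ g.cVal σ h < g.aValH h ∨ g.aValH h < g.acVal h)

end GSRGame

/-! ### Auxiliary development for Statement 17 -/

namespace GSRGame

variable (g : GSRGame)

/-- A default strategy, picking an arbitrary successor. -/
noncomputable def dflt : g.Strat where
  act h := if hne : h = [] then g.v0 else Classical.choose (g.succ_exists (h.getLast hne))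
  valid h hne := by
    simp only [dif_neg hne]
    exact Classical.choose_spec (g.succ_exists (h.getLast hne))

/-- The vertex appended by one step of play. -/
noncomputable def stepVertex (σ τ : g.Strat) (h : List g.V) : g.V :=
  if g.protag (h.getLastD g.v0) then σ.act h else τ.act h

lemma step_def (σ τ : g.Strat) (l : List g.V) :
    g.step σ τ l = l ++ [g.stepVertex σ τ l] := rfl

lemma stepVertex_edge (σ τ : g.Strat) {l : List g.V} (hne : l ≠ []) :
    g.E (l.getLast hne) (g.stepVertex σ τ l) := by
  unfold stepVertex
  split
  · exact σ.valid l hne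
  · exact τ.valid l hne

lemma playList_succ (σ τ : g.Strat) (h : List g.V) (k : ℕ) :
    g.playList σ τ h (k+1) = g.step σ τ (g.playList σ τ h k) := rfl

lemma step_ne_nil (σ τ : g.Strat) (h : List g.V) : g.step σ τ h ≠ [] := by
  simp [step]

lemma playList_ne_nil (σ τ : g.Strat) {h : List g.V} (hne : h ≠ []) (k : ℕ) :
    g.playList σ τ h k ≠ [] := by
  cases k with
  | zero => exact hne
  | succ k => exact g.step_ne_nil σ τ _

lemma playList_length (σ τ : g.Strat) (h : List g.V) (k : ℕ) :
    (g.playList σ τ h k).length = h.length + k := by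
  induction k with
  | zero => rfl
  | succ k ih =>
      simp only [playList_succ, step_def, List.length_append, List.length_cons,
        List.length_nil, ih]
      omega

lemma playList_add (σ τ : g.Strat) (h : List g.V) (m k : ℕ) :
    g.playList σ τ h (m + k) = g.playList σ τ (g.playList σ τ h m) k := by
  induction k with
  | zero => rfl
  | succ k ih =>
      have hmk : m + (k+1) = (m + k) + 1 := rfl
      rw [hmk, playList_succ, ih, ← playList_succ]

lemma playList_prefix (σ τ : g.Strat) (h : List g.V) (k : ℕ) :
    h <+: g.playList σ τ h k := by
  induction k with
  | zero => exact List.prefix_refl _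
  | succ k ih =>
      rw [playList_succ, step_def]
      exact ih.trans (List.prefix_append _ _)

lemma playList_mono (σ τ : g.Strat) (h : List g.V) {m k : ℕ} (hmk : m ≤ k) :
    g.playList σ τ h m <+: g.playList σ τ h k := by
  obtain ⟨j, rfl⟩ := Nat.exists_eq_add_of_le hmk
  rw [playList_add]
  exact g.playList_prefix σ τ _ j

lemma getLast_eq_getLastD {l : List g.V} (hne : l ≠ []) : l.getLast hne = l.getLastD g.v0 := by
  rw [List.getLastD_eq_getLast?, List.getLast?_eq_getLast hne]
  rfl

lemma getLastD_append {l t : List g.V} (ht : t ≠ []) :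
    (l ++ t).getLastD g.v0 = t.getLastD g.v0 := by
  rw [List.getLastD_eq_getLast?, List.getLastD_eq_getLast?,
    List.getLast?_append_of_ne_nil _ ht]

lemma playList_chain (σ τ : g.Strat) {h : List g.V} (hne : h ≠ [])
    (hch : List.Chain' g.E h) (k : ℕ) : List.Chain' g.E (g.playList σ τ h k) := by
  induction k with
  | zero => exact hch
  | succ k ih =>
      have hnn := g.playList_ne_nil σ τ hne k
      rw [playList_succ, step_def]
      show List.IsChain g.E _
      rw [List.isChain_append]
      refine ⟨ih, List.isChain_singleton _, ?_⟩
      intro x hx y hy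
      simp only [List.head?_cons, Option.mem_def, Option.some.injEq] at hy
      rw [List.getLast?_eq_getLast hnn, Option.mem_def, Option.some.injEq] at hx
      subst hx
      rw [← hy]
      exact g.stepVertex_edge σ τ hnn

lemma play_eq (σ τ : g.Strat) (h : List g.V) (k : ℕ) :
    g.play σ τ h (k+1) = g.stepVertex σ τ (g.playList σ τ h k) := by
  show (g.playList σ τ h (k+1)).getLastD g.v0 = _
  rw [playList_succ, step_def, List.getLastD_concat]

lemma play_absorb (σ τ : g.Strat) {h : List g.V} (hne : h ≠ []) (k : ℕ)
    (hl : g.leaf (g.play σ τ h k)) : g.play σ τ h (k+1) = g.play σ τ h k := by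
  have hnn := g.playList_ne_nil σ τ hne k
  have hgl : g.play σ τ h k = (g.playList σ τ h k).getLast hnn := by
    show (g.playList σ τ h k).getLastD g.v0 = _
    rw [g.getLast_eq_getLastD hnn]
  rw [g.play_eq σ τ h k, hgl]
  rw [hgl] at hl
  exact (g.leaf_loop _ _ hl).mp (g.stepVertex_edge σ τ hnn)

lemma leaf_persist (ρ : ℕ → g.V) (habs : ∀ k, g.leaf (ρ k) → ρ (k+1) = ρ k)
    {k m : ℕ} (hkm : k ≤ m) (hl : g.leaf (ρ k)) : ρ m = ρ k := by
  induction m, hkm using Nat.le_induction with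
  | base => rfl
  | succ m hkm ih =>
      have hm : g.leaf (ρ m) := by rw [ih]; exact hl
      rw [habs m hm, ih]

lemma payoffOf_shift (ρ : ℕ → g.V) (habs : ∀ k, g.leaf (ρ k) → ρ (k+1) = ρ k) (n : ℕ) :
    g.payoffOf (fun k => ρ (n + k)) = g.payoffOf ρ := by
  unfold payoffOf
  by_cases hx : ∃ k, g.leaf (ρ k)
  · have hx' : ∃ k, g.leaf (ρ (n + k)) := by
      obtain ⟨k, hk⟩ := hx
      refine ⟨k, ?_⟩
      rw [g.leaf_persist ρ habs (Nat.le_add_left k n) hk]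
      exact hk
    rw [dif_pos hx, dif_pos hx']
    congr 1
    have h1 : g.leaf (ρ (Nat.find hx)) := Nat.find_spec hx
    have h2 : g.leaf (ρ (n + Nat.find hx')) := Nat.find_spec hx'
    have hle : Nat.find hx ≤ n + Nat.find hx' := Nat.find_min' hx h2
    exact g.leaf_persist ρ habs hle h1
  · have hx' : ¬ ∃ k, g.leaf (ρ (n + k)) := fun ⟨k, hk⟩ => hx ⟨n + k, hk⟩
    rw [dif_neg hx, dif_neg hx']

lemma play_add (σ τ : g.Strat) (h : List g.V) (n k : ℕ) :
    g.play σ τ (g.playList σ τ h n) k = g.play σ τ h (n + k) := by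
  unfold play
  rw [playList_add]

lemma pval_playList (σ τ : g.Strat) {h : List g.V} (hne : h ≠ []) (n : ℕ) :
    g.pval σ τ (g.playList σ τ h n) = g.pval σ τ h := by
  unfold pval
  have heq : g.play σ τ (g.playList σ τ h n) = fun k => g.play σ τ h (n + k) :=
    funext (g.play_add σ τ h n)
  rw [heq]
  exact g.payoffOf_shift _ (fun k => g.play_absorb σ τ hne k) n

lemma playList_head? (σ τ : g.Strat) {h : List g.V} (hne : h ≠ []) (k : ℕ) :
    (g.playList σ τ h k).head? = h.head? := by
  obtain ⟨t, ht⟩ := g.playList_prefix σ τ h k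
  rw [← ht]
  cases h with
  | nil => exact absurd rfl hne
  | cons a l => rfl

lemma prefix_eq_of_length {p q l : List g.V} (hp : p <+: l) (hq : q <+: l)
    (h : p.length = q.length) : p = q :=
  (List.prefix_of_prefix_length_le hp hq h.le).eq_of_length h

lemma prefix_playList_eq (σ τ : g.Strat) {h p : List g.V} {k : ℕ}
    (hp : p <+: g.playList σ τ h k) (hlen : h.length ≤ p.length) :
    p = g.playList σ τ h (p.length - h.length) := by
  have hl1 : p.length ≤ h.length + k := by
    have := hp.length_le
    rwa [g.playList_length] at this
  have hle : p.length - h.length ≤ k := by omega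
  have hq : g.playList σ τ h (p.length - h.length) <+: g.playList σ τ h k :=
    g.playList_mono σ τ h hle
  exact g.prefix_eq_of_length hp hq (by rw [g.playList_length]; omega)

lemma compat_singleton (σ : g.Strat) : g.Compat σ [g.v0] := by
  refine ⟨by simp, rfl, List.isChain_singleton _, ?_⟩
  intro p v hpre hpne _
  have h1 := hpre.length_le
  rw [List.length_append] at h1
  simp only [List.length_cons, List.length_nil, List.length_singleton] at h1
  have : p.length = 0 := by omega
  exact absurd (List.length_eq_zero_iff.mp this) hpne

lemma compat_prefix (σ : g.Strat) {p h : List g.V} (hc : g.Compat σ h) (hp : p <+: h)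
    (hpne : p ≠ []) : g.Compat σ p := by
  obtain ⟨hne, hhead, hch, hmv⟩ := hc
  refine ⟨hpne, ?_, hch.prefix hp, fun q v hq hqne hqp => hmv q v (hq.trans hp) hqne hqp⟩
  obtain ⟨t, rfl⟩ := hp
  cases p with
  | nil => exact absurd rfl hpne
  | cons a l => simpa using hhead

lemma compat_v0_prefix (σ : g.Strat) {h : List g.V} (hc : g.Compat σ h) : [g.v0] <+: h := by
  cases h with
  | nil => exact absurd rfl hc.1
  | cons a l =>
      have ha : a = g.v0 := by simpa using hc.2.1
      subst ha
      exact ⟨l, rfl⟩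

lemma compat_playList (σ τ : g.Strat) {h : List g.V} (hc : g.Compat σ h) (k : ℕ) :
    g.Compat σ (g.playList σ τ h k) := by
  obtain ⟨hne, hhead, hch, hmv⟩ := hc
  refine ⟨g.playList_ne_nil σ τ hne k, by rw [g.playList_head? σ τ hne k]; exact hhead,
    g.playList_chain σ τ hne hch k, ?_⟩
  intro p v hpre hpne hprot
  by_cases hlen : p.length + 1 ≤ h.length
  · have hph : p ++ [v] <+: h := by
      refine List.prefix_of_prefix_length_le hpre (g.playList_prefix σ τ h k) ?_
      rw [List.length_append]
      simpa using hlen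
    exact hmv p v hph hpne hprot
  · push_neg at hlen
    have hlen' : h.length ≤ p.length := by omega
    have hp1 : p <+: g.playList σ τ h k := (List.prefix_append p [v]).trans hpre
    have hpeq : p = g.playList σ τ h (p.length - h.length) := g.prefix_playList_eq σ τ hp1 hlen'
    have hpv : p ++ [v] = g.playList σ τ h ((p ++ [v]).length - h.length) :=
      g.prefix_playList_eq σ τ hpre (by rw [List.length_append]; simp; omega)
    have hIdx : (p ++ [v]).length - h.length = (p.length - h.length) + 1 := by
      rw [List.length_append]; simp; omega
    rw [hIdx, playList_succ, ← hpeq, step_def] at hpv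
    have hv : v = g.stepVertex σ τ p := by simpa using hpv
    rw [hv]
    simp only [stepVertex, if_pos hprot]

/-- The strategy that follows the history `h` while the current history is a proper prefix
of `h`, and plays like `τ'` afterwards. -/
noncomputable def follow (h : List g.V) (hch : List.Chain' g.E h) (τ' : g.Strat) : g.Strat where
  act x := if hx : x <+: h ∧ x.length < h.length ∧ x ≠ [] then h[x.length]'hx.2.1 else τ'.act x
  valid x hne := by
    by_cases hx : x <+: h ∧ x.length < h.length ∧ x ≠ []
    · rw [dif_pos hx]
      have hlen1 : 1 ≤ x.length := by
        rcases Nat.eq_zero_or_pos x.length with h0 | h1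
        · exact absurd (List.length_eq_zero_iff.mp h0) hne
        · exact h1
      have hc := List.isChain_iff_getElem.mp hch (x.length - 1) (by omega)
      have e2 : x.length - 1 + 1 = x.length := by omega
      simp only [e2] at hc
      have e1 : x.getLast hne = h[x.length - 1]'(by omega) := by
        rw [List.getLast_eq_getElem]
        exact hx.1.getElem (by omega)
      rw [e1]
      exact hc
    · rw [dif_neg hx]
      exact τ'.valid x hne

lemma follow_act (h : List g.V) (hch : List.Chain' g.E h) (τ' : g.Strat) (x : List g.V) :
    (g.follow h hch τ').act x =
      if hx : x <+: h ∧ x.length < h.length ∧ x ≠ [] then h[x.length]'hx.2.1 else τ'.act x := rfl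

/-- Combination of two strategies depending on whether the history extends `c`. -/
noncomputable def combine (c : List g.V) (τ₁ τ₂ : g.Strat) : g.Strat where
  act x := if c <+: x then τ₁.act x else τ₂.act x
  valid x hne := by
    by_cases hc : c <+: x
    · rw [if_pos hc]; exact τ₁.valid x hne
    · rw [if_neg hc]; exact τ₂.valid x hne

lemma combine_act (c : List g.V) (τ₁ τ₂ : g.Strat) (x : List g.V) :
    (g.combine c τ₁ τ₂).act x = if c <+: x then τ₁.act x else τ₂.act x := rfl

lemma playList_eq_of_agree (σ τ₁ τ₂ : g.Strat) {h : List g.V}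
    (hstep : g.step σ τ₁ h = g.step σ τ₂ h)
    (hag : ∀ x, g.step σ τ₂ h <+: x → τ₁.act x = τ₂.act x) (k : ℕ) :
    g.playList σ τ₁ h k = g.playList σ τ₂ h k := by
  induction k with
  | zero => rfl
  | succ k ih =>
      cases k with
      | zero => exact hstep
      | succ k' =>
          rw [g.playList_succ σ τ₁ h (k'+1), g.playList_succ σ τ₂ h (k'+1), ih]
          have hpref : g.step σ τ₂ h <+: g.playList σ τ₂ h (k' + 1) := by
            rw [show g.step σ τ₂ h = g.playList σ τ₂ h 1 from rfl]
            exact g.playList_mono σ τ₂ h (by omega)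
          rw [step_def, step_def]
          simp only [stepVertex]
          rw [hag _ hpref]

lemma pval_eq_of_agree (σ τ₁ τ₂ : g.Strat) {h : List g.V}
    (hstep : g.step σ τ₁ h = g.step σ τ₂ h)
    (hag : ∀ x, g.step σ τ₂ h <+: x → τ₁.act x = τ₂.act x) :
    g.pval σ τ₁ h = g.pval σ τ₂ h := by
  unfold pval
  congr 1
  funext k
  show (g.playList σ τ₁ h k).getLastD g.v0 = (g.playList σ τ₂ h k).getLastD g.v0
  rw [g.playList_eq_of_agree σ τ₁ τ₂ hstep hag k]

lemma pval_eq_of_agree' (σ τ₁ τ₂ : g.Strat) {h : List g.V}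
    (hag : ∀ x, h <+: x → τ₁.act x = τ₂.act x) :
    g.pval σ τ₁ h = g.pval σ τ₂ h := by
  have hh : h <+: g.step σ τ₂ h := by
    rw [step_def]
    exact List.prefix_append _ _
  refine g.pval_eq_of_agree σ τ₁ τ₂ ?_ (fun x hx => hag x (hh.trans hx))
  rw [step_def, step_def]
  simp only [stepVertex]
  rw [hag h (List.prefix_refl h)]

lemma follow_reach (σ τ' : g.Strat) {p h : List g.V} (hc : g.Compat σ h)
    (hch : List.Chain' g.E h) (hp : p <+: h) (hpne : p ≠ []) {k : ℕ}
    (hk : p.length + k ≤ h.length) :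
    g.playList σ (g.follow h hch τ') p k = h.take (p.length + k) := by
  induction k with
  | zero =>
      rw [Nat.add_zero, ← List.prefix_iff_eq_take.mp hp]
      rfl
  | succ k ih =>
      have hk' : p.length + k ≤ h.length := by omega
      have hklt : p.length + k < h.length := by omega
      have hstep : p.length + (k + 1) = (p.length + k) + 1 := rfl
      rw [hstep, playList_succ, ih hk']
      set y := h.take (p.length + k) with hy
      have hylen : y.length = p.length + k := by rw [hy, List.length_take]; omega
      have hyp : y <+: h := List.take_prefix _ _
      have hyne : y ≠ [] := by
        intro h0
        rw [h0] at hylen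
        simp only [List.length_nil] at hylen
        have hpl : p.length ≠ 0 := fun hh => hpne (List.length_eq_zero_iff.mp hh)
        omega
      have htake : h.take (p.length + k + 1) = y ++ [h[p.length + k]'hklt] := by
        rw [hy, ← List.take_concat_get hklt, List.concat_eq_append]
      have hsv : g.stepVertex σ (g.follow h hch τ') y = h[p.length + k]'hklt := by
        by_cases hprot : g.protag (y.getLastD g.v0)
        · have hpre2 : y ++ [h[p.length + k]'hklt] <+: h := by
            rw [← htake]; exact List.take_prefix _ _
          have := hc.2.2.2 y (h[p.length + k]'hklt) hpre2 hyne hprot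
          simp only [stepVertex, if_pos hprot]
          exact this
        · simp only [stepVertex, if_neg hprot, follow_act]
          rw [dif_pos ⟨hyp, by omega, hyne⟩]
          simp only [hylen]
      rw [step_def, hsv, htake]

lemma pval_follow (σ τ' : g.Strat) {p h : List g.V} (hc : g.Compat σ h)
    (hch : List.Chain' g.E h) (hp : p <+: h) (hpne : p ≠ []) :
    g.pval σ (g.follow h hch τ') p = g.pval σ τ' h := by
  have hlen : p.length ≤ h.length := hp.length_le
  have hreach : g.playList σ (g.follow h hch τ') p (h.length - p.length) = h := by
    rw [g.follow_reach σ τ' hc hch hp hpne (by omega)]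
    rw [show p.length + (h.length - p.length) = h.length from by omega]
    exact List.take_length
  have h1 := g.pval_playList σ (g.follow h hch τ') hpne (h.length - p.length)
  rw [hreach] at h1
  rw [← h1]
  refine g.pval_eq_of_agree' σ _ τ' ?_
  intro x hx
  rw [follow_act, dif_neg]
  rintro ⟨-, hlt, -⟩
  have := hx.length_le
  omega

/-! ### Value sets -/

/-- The set of all possible payoffs. -/
def P0 : Set ℤ := insert 0 (Set.range g.pay)

lemma P0_finite : g.P0.Finite := by
  have := g.fin
  exact (Set.finite_range g.pay).insert 0

lemma pval_mem_P0 (σ τ : g.Strat) (h : List g.V) : g.pval σ τ h ∈ g.P0 := by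
  unfold pval payoffOf
  split
  · exact Set.mem_insert_of_mem _ ⟨_, rfl⟩
  · exact Set.mem_insert _ _

/-- The set of payoffs achievable against `σ` from `h`. -/
def SS (σ : g.Strat) (h : List g.V) : Set ℤ := {z | ∃ τ : g.Strat, z = g.pval σ τ h}

lemma SS_nonempty (σ : g.Strat) (h : List g.V) : (g.SS σ h).Nonempty := ⟨_, g.dflt, rfl⟩

lemma SS_subset (σ : g.Strat) (h : List g.V) : g.SS σ h ⊆ g.P0 := by
  rintro z ⟨τ, rfl⟩
  exact g.pval_mem_P0 σ τ h

lemma SS_finite (σ : g.Strat) (h : List g.V) : (g.SS σ h).Finite :=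
  g.P0_finite.subset (g.SS_subset σ h)

lemma aVal_mem (σ : g.Strat) (h : List g.V) : ∃ τ : g.Strat, g.aVal σ h = g.pval σ τ h :=
  (g.SS_nonempty σ h).csInf_mem (g.SS_finite σ h)

lemma cVal_mem (σ : g.Strat) (h : List g.V) : ∃ τ : g.Strat, g.cVal σ h = g.pval σ τ h :=
  (g.SS_nonempty σ h).csSup_mem (g.SS_finite σ h)

lemma aVal_le_pval (σ τ : g.Strat) (h : List g.V) : g.aVal σ h ≤ g.pval σ τ h :=
  csInf_le (g.SS_finite σ h).bddBelow ⟨τ, rfl⟩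

lemma pval_le_cVal (σ τ : g.Strat) (h : List g.V) : g.pval σ τ h ≤ g.cVal σ h :=
  le_csSup (g.SS_finite σ h).bddAbove ⟨τ, rfl⟩

lemma aVal_le_cVal (σ : g.Strat) (h : List g.V) : g.aVal σ h ≤ g.cVal σ h := by
  obtain ⟨τ, hτ⟩ := g.aVal_mem σ h
  rw [hτ]
  exact g.pval_le_cVal σ τ h

lemma aVal_mem_P0 (σ : g.Strat) (h : List g.V) : g.aVal σ h ∈ g.P0 := by
  obtain ⟨τ, hτ⟩ := g.aVal_mem σ h
  rw [hτ]
  exact g.pval_mem_P0 σ τ h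

lemma cVal_mem_P0 (σ : g.Strat) (h : List g.V) : g.cVal σ h ∈ g.P0 := by
  obtain ⟨τ, hτ⟩ := g.cVal_mem σ h
  rw [hτ]
  exact g.pval_mem_P0 σ τ h

/-- The set of antagonistic values of strategies from `h`. -/
def AA (h : List g.V) : Set ℤ := {z | ∃ σ : g.Strat, z = g.aVal σ h}

lemma AA_nonempty (h : List g.V) : (g.AA h).Nonempty := ⟨_, g.dflt, rfl⟩

lemma AA_finite (h : List g.V) : (g.AA h).Finite := by
  refine g.P0_finite.subset ?_
  rintro z ⟨σ, rfl⟩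
  exact g.aVal_mem_P0 σ h

lemma aVal_le_aValH (σ : g.Strat) (h : List g.V) : g.aVal σ h ≤ g.aValH h :=
  le_csSup (g.AA_finite h).bddAbove ⟨σ, rfl⟩

lemma aValH_mem (h : List g.V) : ∃ σ : g.Strat, g.aValH h = g.aVal σ h :=
  (g.AA_nonempty h).csSup_mem (g.AA_finite h)

/-- The set whose supremum is `acVal`. -/
def CC (h : List g.V) : Set ℤ :=
  {z | ∃ σ : g.Strat, g.aValH h ≤ g.aVal σ h ∧ z = g.cVal σ h}

lemma CC_nonempty (h : List g.V) : (g.CC h).Nonempty := by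
  obtain ⟨σ₀, h₀⟩ := g.aValH_mem h
  exact ⟨g.cVal σ₀ h, σ₀, le_of_eq h₀, rfl⟩

lemma CC_finite (h : List g.V) : (g.CC h).Finite := by
  refine g.P0_finite.subset ?_
  rintro z ⟨σ, -, rfl⟩
  exact g.cVal_mem_P0 σ h

lemma cVal_le_acVal {σ : g.Strat} {h : List g.V} (hge : g.aValH h ≤ g.aVal σ h) :
    g.cVal σ h ≤ g.acVal h :=
  le_csSup (g.CC_finite h).bddAbove ⟨σ, hge, rfl⟩

lemma aValH_le_acVal (h : List g.V) : g.aValH h ≤ g.acVal h := by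
  obtain ⟨σ₀, h₀⟩ := g.aValH_mem h
  calc g.aValH h = g.aVal σ₀ h := h₀
    _ ≤ g.cVal σ₀ h := g.aVal_le_cVal σ₀ h
    _ ≤ g.acVal h := g.cVal_le_acVal (le_of_eq h₀)

lemma SS_anti {σ : g.Strat} {p h : List g.V} (hc : g.Compat σ h) (hp : p <+: h)
    (hpne : p ≠ []) : g.SS σ h ⊆ g.SS σ p := by
  rintro z ⟨τ', rfl⟩
  exact ⟨g.follow h hc.2.2.1 τ', (g.pval_follow σ τ' hc hc.2.2.1 hp hpne).symm⟩

lemma aVal_prefix_le (σ : g.Strat) {p h : List g.V} (hc : g.Compat σ h) (hp : p <+: h)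
    (hpne : p ≠ []) : g.aVal σ p ≤ g.aVal σ h :=
  csInf_le_csInf (g.SS_finite σ p).bddBelow (g.SS_nonempty σ h) (g.SS_anti hc hp hpne)

lemma cVal_prefix_ge (σ : g.Strat) {p h : List g.V} (hc : g.Compat σ h) (hp : p <+: h)
    (hpne : p ≠ []) : g.cVal σ h ≤ g.cVal σ p :=
  csSup_le_csSup (g.SS_finite σ p).bddAbove (g.SS_nonempty σ h) (g.SS_anti hc hp hpne)

/-! ### Transferring strategies between histories with the same last vertex -/

/-- Transfer of a strategy: `xfer p h σ`, viewed from `h`, plays as `σ` would play from `p`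
(for histories extending `h`, after replacing the prefix `h` by `p`). -/
noncomputable def xfer (p h : List g.V) (σ : g.Strat) : g.Strat where
  act x := if hx : h <+: x ∧ p ≠ [] ∧ h ≠ [] ∧ p.getLastD g.v0 = h.getLastD g.v0
           then σ.act (p ++ x.drop h.length) else g.dflt.act x
  valid x hne := by
    by_cases hx : h <+: x ∧ p ≠ [] ∧ h ≠ [] ∧ p.getLastD g.v0 = h.getLastD g.v0
    · rw [dif_pos hx]
      obtain ⟨hpre, hpne, hhne, hlast⟩ := hx
      have hne2 : p ++ x.drop h.length ≠ [] := by simp [hpne]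
      have hgl : (p ++ x.drop h.length).getLast hne2 = x.getLast hne := by
        rw [g.getLast_eq_getLastD hne2, g.getLast_eq_getLastD hne]
        by_cases hd : x.drop h.length = []
        · have hxh : x = h := by
            refine (hpre.eq_of_length ?_).symm
            have h1 := hpre.length_le
            have h2 : x.length ≤ h.length := List.drop_eq_nil_iff.mp hd
            omega
          rw [hd, List.append_nil, hlast, hxh]
        · have hx2 : h ++ x.drop h.length = x := by
            obtain ⟨t, rfl⟩ := hpre
            rw [List.drop_left]
          rw [g.getLastD_append hd]
          conv_rhs => rw [← hx2, g.getLastD_append hd]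
      rw [← hgl]
      exact σ.valid _ hne2
    · rw [dif_neg hx]
      exact g.dflt.valid x hne

lemma xfer_act {p h : List g.V} (hpne : p ≠ []) (hhne : h ≠ [])
    (hlast : p.getLastD g.v0 = h.getLastD g.v0) (σ : g.Strat) {x : List g.V} (hx : h <+: x) :
    (g.xfer p h σ).act x = σ.act (p ++ x.drop h.length) := by
  show (if hx : _ ∧ _ ∧ _ ∧ _ then _ else _) = _
  rw [dif_pos ⟨hx, hpne, hhne, hlast⟩]

lemma getLastD_base {p h y : List g.V} (hlast : p.getLastD g.v0 = h.getLastD g.v0)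
    (hpy : p <+: y) : (h ++ y.drop p.length).getLastD g.v0 = y.getLastD g.v0 := by
  have hyd : p ++ y.drop p.length = y := by
    obtain ⟨t, rfl⟩ := hpy
    rw [List.drop_left]
  by_cases hd : y.drop p.length = []
  · rw [hd, List.append_nil] at hyd ⊢
    rw [← hyd]
    exact hlast.symm
  · rw [g.getLastD_append hd]
    conv_rhs => rw [← hyd, g.getLastD_append hd]

lemma xfer_playList {p h : List g.V} (hpne : p ≠ []) (hhne : h ≠ [])
    (hlast : p.getLastD g.v0 = h.getLastD g.v0) (σ τ : g.Strat) (k : ℕ) :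
    g.playList (g.xfer p h σ) τ h k = h ++ (g.playList σ (g.xfer h p τ) p k).drop p.length := by
  induction k with
  | zero =>
      show h = h ++ p.drop p.length
      rw [List.drop_length, List.append_nil]
  | succ k ih =>
      rw [playList_succ, playList_succ, ih]
      set y := g.playList σ (g.xfer h p τ) p k with hy
      have hpy : p <+: y := g.playList_prefix σ _ p k
      have hyne : y ≠ [] := g.playList_ne_nil σ _ hpne k
      have hyd : p ++ y.drop p.length = y := by
        obtain ⟨t, ht⟩ := hpy
        rw [← ht, List.drop_left]
      set x := h ++ y.drop p.length with hxdef
      have hlast2 : x.getLastD g.v0 = y.getLastD g.v0 := g.getLastD_base hlast hpy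
      have hyx : p ++ x.drop h.length = y := by
        rw [hxdef, List.drop_left, hyd]
      have hhx : h <+: x := by
        rw [hxdef]
        exact List.prefix_append _ _
      have hsv : g.stepVertex (g.xfer p h σ) τ x = g.stepVertex σ (g.xfer h p τ) y := by
        simp only [stepVertex, hlast2]
        by_cases hprot : g.protag (y.getLastD g.v0)
        · rw [if_pos hprot, if_pos hprot, g.xfer_act hpne hhne hlast σ hhx, hyx]
        · rw [if_neg hprot, if_neg hprot, g.xfer_act hhne hpne hlast.symm τ hpy, ← hxdef]
      rw [step_def, step_def, hsv, List.drop_append_of_le_length hpy.length_le,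
        ← List.append_assoc, ← hxdef]

lemma xfer_pval {p h : List g.V} (hpne : p ≠ []) (hhne : h ≠ [])
    (hlast : p.getLastD g.v0 = h.getLastD g.v0) (σ τ : g.Strat) :
    g.pval (g.xfer p h σ) τ h = g.pval σ (g.xfer h p τ) p := by
  unfold pval
  congr 1
  funext k
  show (g.playList (g.xfer p h σ) τ h k).getLastD g.v0 = _
  rw [g.xfer_playList hpne hhne hlast σ τ k]
  exact g.getLastD_base hlast (g.playList_prefix σ _ p k)

lemma SS_xfer {p h : List g.V} (hpne : p ≠ []) (hhne : h ≠ [])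
    (hlast : p.getLastD g.v0 = h.getLastD g.v0) (σ : g.Strat) :
    g.SS (g.xfer p h σ) h = g.SS σ p := by
  ext z
  constructor
  · rintro ⟨τ, rfl⟩
    exact ⟨g.xfer h p τ, g.xfer_pval hpne hhne hlast σ τ⟩
  · rintro ⟨τ', rfl⟩
    refine ⟨g.xfer p h τ', ?_⟩
    rw [g.xfer_pval hpne hhne hlast σ (g.xfer p h τ')]
    refine (g.pval_eq_of_agree' σ _ τ' ?_).symm
    intro x hx
    rw [g.xfer_act hhne hpne hlast.symm _ hx,
      g.xfer_act hpne hhne hlast τ' (List.prefix_append h _), List.drop_left]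
    congr 1
    obtain ⟨t, rfl⟩ := hx
    rw [List.drop_left]

lemma aVal_xfer {p h : List g.V} (hpne : p ≠ []) (hhne : h ≠ [])
    (hlast : p.getLastD g.v0 = h.getLastD g.v0) (σ : g.Strat) :
    g.aVal (g.xfer p h σ) h = g.aVal σ p :=
  congrArg sInf (g.SS_xfer hpne hhne hlast σ)

lemma cVal_xfer {p h : List g.V} (hpne : p ≠ []) (hhne : h ≠ [])
    (hlast : p.getLastD g.v0 = h.getLastD g.v0) (σ : g.Strat) :
    g.cVal (g.xfer p h σ) h = g.cVal σ p :=
  congrArg sSup (g.SS_xfer hpne hhne hlast σ)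

lemma aValH_congr {p h : List g.V} (hpne : p ≠ []) (hhne : h ≠ [])
    (hlast : p.getLastD g.v0 = h.getLastD g.v0) : g.aValH p = g.aValH h := by
  have hset : g.AA p = g.AA h := by
    ext z
    constructor
    · rintro ⟨σ, rfl⟩
      exact ⟨g.xfer p h σ, (g.aVal_xfer hpne hhne hlast σ).symm⟩
    · rintro ⟨σ, rfl⟩
      exact ⟨g.xfer h p σ, (g.aVal_xfer hhne hpne hlast.symm σ).symm⟩
  exact congrArg sSup hset

lemma acVal_congr {p h : List g.V} (hpne : p ≠ []) (hhne : h ≠ [])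
    (hlast : p.getLastD g.v0 = h.getLastD g.v0) : g.acVal p = g.acVal h := by
  have hH := g.aValH_congr hpne hhne hlast
  have hset : g.CC p = g.CC h := by
    ext z
    constructor
    · rintro ⟨σ, hge, rfl⟩
      exact ⟨g.xfer p h σ, by rw [g.aVal_xfer hpne hhne hlast σ, ← hH]; exact hge,
        (g.cVal_xfer hpne hhne hlast σ).symm⟩
    · rintro ⟨σ, hge, rfl⟩
      exact ⟨g.xfer h p σ, by rw [g.aVal_xfer hhne hpne hlast.symm σ, hH]; exact hge,
        (g.cVal_xfer hhne hpne hlast.symm σ).symm⟩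
  exact congrArg sSup hset

/-! ### Divergence of plays and the dominance trick -/

lemma diverge (σ τ τs : g.Strat) (hne : g.pval σ τs [g.v0] ≠ g.pval τ τs [g.v0]) :
    ∃ n : ℕ, g.playList σ τs [g.v0] n = g.playList τ τs [g.v0] n ∧
      g.protag ((g.playList σ τs [g.v0] n).getLastD g.v0) ∧
      σ.act (g.playList σ τs [g.v0] n) ≠ τ.act (g.playList σ τs [g.v0] n) := by
  have hk : ∃ k, g.playList σ τs [g.v0] k ≠ g.playList τ τs [g.v0] k := by
    by_contra hall
    push_neg at hall
    apply hne
    unfold pval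
    congr 1
    funext k
    show (g.playList σ τs [g.v0] k).getLastD g.v0 = (g.playList τ τs [g.v0] k).getLastD g.v0
    rw [hall k]
  obtain ⟨K, hKspec, hKmin⟩ : ∃ K, (g.playList σ τs [g.v0] K ≠ g.playList τ τs [g.v0] K) ∧
      ∀ m < K, ¬(g.playList σ τs [g.v0] m ≠ g.playList τ τs [g.v0] m) :=
    ⟨Nat.find hk, Nat.find_spec hk, fun m hm => Nat.find_min hk hm⟩
  have hK0 : K ≠ 0 := by
    intro h0
    subst h0
    exact hKspec rfl
  obtain ⟨n, rfl⟩ : ∃ n, K = n + 1 := ⟨K - 1, by omega⟩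
  have heq : g.playList σ τs [g.v0] n = g.playList τ τs [g.v0] n := by
    have := hKmin n (by omega)
    push_neg at this
    exact this
  set y := g.playList σ τs [g.v0] n with hdefy
  have hstepne : g.step σ τs y ≠ g.step τ τs y := by
    intro he
    apply hKspec
    rw [playList_succ, playList_succ, ← heq, he]
  have hsv : g.stepVertex σ τs y ≠ g.stepVertex τ τs y := by
    intro he
    apply hstepne
    rw [step_def, step_def, he]
  have hprot : g.protag (y.getLastD g.v0) := by
    by_contra hp
    apply hsv
    simp only [stepVertex, if_neg hp]
  have hact : σ.act y ≠ τ.act y := by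
    intro he
    apply hsv
    simp only [stepVertex, if_pos hprot]
    exact he
  exact ⟨n, heq, hprot, hact⟩

lemma dom_trick {σ τ : g.Strat} (hdom : g.Dom σ τ) {h : List g.V}
    (hcσ : g.Compat σ h) (hcτ : g.Compat τ h)
    (hprot : g.protag (h.getLastD g.v0)) (hact : σ.act h ≠ τ.act h) :
    g.cVal σ h ≤ g.aVal τ h := by
  obtain ⟨τc, hτc⟩ := g.cVal_mem σ h
  obtain ⟨τp, hτp⟩ := g.aVal_mem τ h
  set γ := g.combine (h ++ [σ.act h]) τc τp with hγ
  have hchσ := hcσ.2.2.1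
  set τ'' := g.follow h hchσ γ with hτ''
  have h1 : g.pval σ τ'' [g.v0] = g.pval σ γ h :=
    g.pval_follow σ γ hcσ hchσ (g.compat_v0_prefix σ hcσ) (by simp)
  have hstepc : g.step σ τc h = h ++ [σ.act h] := by
    rw [step_def]
    simp only [stepVertex, if_pos hprot]
  have h2 : g.pval σ γ h = g.pval σ τc h := by
    refine g.pval_eq_of_agree σ γ τc ?_ ?_
    · rw [step_def, step_def]
      simp only [stepVertex, if_pos hprot]
    · intro x hx
      rw [hstepc] at hx
      rw [hγ, combine_act, if_pos hx]
  have hstepp : g.step τ τp h = h ++ [τ.act h] := by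
    rw [step_def]
    simp only [stepVertex, if_pos hprot]
  have h3 : g.pval τ τ'' [g.v0] = g.pval τ γ h :=
    g.pval_follow τ γ hcτ hchσ (g.compat_v0_prefix τ hcτ) (by simp)
  have h4 : g.pval τ γ h = g.pval τ τp h := by
    refine g.pval_eq_of_agree τ γ τp ?_ ?_
    · rw [step_def, step_def]
      simp only [stepVertex, if_pos hprot]
    · intro x hx
      rw [hstepp] at hx
      have hnot : ¬ (h ++ [σ.act h] <+: x) := by
        intro hcon
        have heq2 : h ++ [σ.act h] = h ++ [τ.act h] :=
          g.prefix_eq_of_length hcon hx (by simp)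
        simp only [List.append_cancel_left_eq, List.cons.injEq, and_true] at heq2
        exact hact heq2
      rw [hγ, combine_act, if_neg hnot]
  have hd := hdom τ''
  rw [h1, h2, h3, h4] at hd
  rw [hτc, hτp]
  exact hd

end GSRGame

/-- `σ` is preadmissible: every witness of non-admissibility `h` of `σ`, ending in some
vertex `v`, has a proper nonempty prefix `p` ending in the same vertex `v` with
`aVal(p, σ) = aVal(p)` and `cVal(p, σ) = acVal(p)`. -/
def GSRGame.Preadmissible (g : GSRGame) (σ : g.Strat) : Prop :=
  ∀ h : List g.V, g.NonAdmWitness σ h →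
    ∃ p : List g.V, p <+: h ∧ p ≠ h ∧ p ≠ [] ∧ p.getLastD g.v0 = h.getLastD g.v0 ∧
      g.aVal σ p = g.aValH p ∧ g.cVal σ p = g.acVal p


/-- if `σ` is preadmissible and `σ ⪯ τ`, then `aVal(v₀, σ) = aVal(v₀, τ)` and
`cVal(v₀, σ) = cVal(v₀, τ)`. -/
theorem stmt17 (g : GSRGame) (σ τ : g.Strat)
    (hpre : g.Preadmissible σ) (hdom : g.Dom σ τ) :
    g.aVal σ [g.v0] = g.aVal τ [g.v0] ∧ g.cVal σ [g.v0] = g.cVal τ [g.v0] := by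
  classical
  have hv0ne : ([g.v0] : List g.V) ≠ [] := by simp
  have hσle : g.aVal σ [g.v0] ≤ g.aVal τ [g.v0] := by
    refine le_csInf (g.SS_nonempty τ [g.v0]) ?_
    rintro z ⟨t, rfl⟩
    exact (g.aVal_le_pval σ t [g.v0]).trans (hdom t)
  have hcle : g.cVal σ [g.v0] ≤ g.cVal τ [g.v0] := by
    refine csSup_le (g.SS_nonempty σ [g.v0]) ?_
    rintro z ⟨t, rfl⟩
    exact (hdom t).trans (g.pval_le_cVal τ t [g.v0])
  constructor
  · refine le_antisymm hσle (not_lt.mp fun hlt => ?_)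
    obtain ⟨τs, hτs⟩ := g.aVal_mem σ [g.v0]
    have hneq : g.pval σ τs [g.v0] ≠ g.pval τ τs [g.v0] := by
      intro he
      have h1 := g.aVal_le_pval τ τs [g.v0]
      linarith
    obtain ⟨n, heq, hprot, hact⟩ := g.diverge σ τ τs hneq
    set h := g.playList σ τs [g.v0] n with hdefh
    have hcσ : g.Compat σ h := g.compat_playList σ τs (g.compat_singleton σ) n
    have hcτ : g.Compat τ h := by
      rw [heq]
      exact g.compat_playList τ τs (g.compat_singleton τ) n
    have hhne : h ≠ [] := hcσ.1
    have hA1 : g.aVal σ h ≤ g.aVal σ [g.v0] := by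
      have hph : g.pval σ τs h = g.pval σ τs [g.v0] := by
        rw [hdefh]
        exact g.pval_playList σ τs hv0ne n
      calc g.aVal σ h ≤ g.pval σ τs h := g.aVal_le_pval σ τs h
        _ = g.aVal σ [g.v0] := by rw [hph, hτs]
    have hA2 : g.aVal τ [g.v0] ≤ g.aVal τ h :=
      g.aVal_prefix_le τ hcτ (g.compat_v0_prefix τ hcτ) hv0ne
    have hA3 : g.cVal σ h ≤ g.aVal τ h := g.dom_trick hdom hcσ hcτ hprot hact
    have hA4 : g.aVal τ h ≤ g.aValH h := g.aVal_le_aValH τ h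
    have hA5 : g.aValH h ≤ g.acVal h := g.aValH_le_acVal h
    have hA0 : g.aVal σ h ≤ g.cVal σ h := g.aVal_le_cVal σ h
    have hwit : g.NonAdmWitness σ h := by
      refine ⟨hcσ, hA0, hA3.trans hA4, hA5, ?_⟩
      rcases lt_or_ge (g.aVal σ h) (g.cVal σ h) with hc | hc
      · exact Or.inl hc
      · refine Or.inr (Or.inl ?_)
        linarith
    obtain ⟨p, hp, -, hpne, hplast, heqa, -⟩ := hpre h hwit
    have hAp : g.aVal σ p ≤ g.aVal σ h := g.aVal_prefix_le σ hcσ hp hpne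
    have hHp : g.aValH p = g.aValH h := g.aValH_congr hpne hhne hplast
    linarith
  · refine le_antisymm hcle (not_lt.mp fun hlt => ?_)
    obtain ⟨τs, hτs⟩ := g.cVal_mem τ [g.v0]
    have hneq : g.pval σ τs [g.v0] ≠ g.pval τ τs [g.v0] := by
      intro he
      have h1 := g.pval_le_cVal σ τs [g.v0]
      linarith
    obtain ⟨n, heq, hprot, hact⟩ := g.diverge σ τ τs hneq
    set h := g.playList σ τs [g.v0] n with hdefh
    have hcσ : g.Compat σ h := g.compat_playList σ τs (g.compat_singleton σ) n
    have hcτ : g.Compat τ h := by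
      rw [heq]
      exact g.compat_playList τ τs (g.compat_singleton τ) n
    have hhne : h ≠ [] := hcσ.1
    have hC1 : g.cVal τ [g.v0] ≤ g.cVal τ h := by
      have hph : g.pval τ τs h = g.pval τ τs [g.v0] := by
        rw [heq]
        exact g.pval_playList τ τs hv0ne n
      calc g.cVal τ [g.v0] = g.pval τ τs h := by rw [hph, ← hτs]
        _ ≤ g.cVal τ h := g.pval_le_cVal τ τs h
    have hC2 : g.cVal σ h ≤ g.aVal τ h := g.dom_trick hdom hcσ hcτ hprot hact
    have hC3 : g.aVal τ h ≤ g.aValH h := g.aVal_le_aValH τ h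
    have hC4 : g.aValH h ≤ g.acVal h := g.aValH_le_acVal h
    have hC5 : g.aVal σ h ≤ g.cVal σ h := g.aVal_le_cVal σ h
    have hC6 : g.cVal σ h ≤ g.cVal σ [g.v0] :=
      g.cVal_prefix_ge σ hcσ (g.compat_v0_prefix σ hcσ) hv0ne
    by_cases hstrict : g.aVal σ h < g.cVal σ h ∨ g.cVal σ h < g.aValH h ∨
        g.aValH h < g.acVal h
    · have hwit : g.NonAdmWitness σ h := ⟨hcσ, hC5, hC2.trans hC3, hC4, hstrict⟩
      obtain ⟨p, hp, -, hpne, hplast, heqa, heqc⟩ := hpre h hwit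
      have hAp : g.aVal σ p ≤ g.aVal σ h := g.aVal_prefix_le σ hcσ hp hpne
      have hHp : g.aValH p = g.aValH h := g.aValH_congr hpne hhne hplast
      have hCp : g.acVal p = g.acVal h := g.acVal_congr hpne hhne hplast
      have hτH : g.aValH h ≤ g.aVal τ h := by linarith
      have hacc : g.cVal τ h ≤ g.acVal h := g.cVal_le_acVal hτH
      have hcσp : g.Compat σ p := g.compat_prefix σ hcσ hp hpne
      have hcp : g.cVal σ p ≤ g.cVal σ [g.v0] :=
        g.cVal_prefix_ge σ hcσp (g.compat_v0_prefix σ hcσp) hv0ne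
      linarith
    · push_neg at hstrict
      obtain ⟨e1, e2, e3⟩ := hstrict
      have hτH : g.aValH h ≤ g.aVal τ h := by linarith
      have hacc : g.cVal τ h ≤ g.acVal h := g.cVal_le_acVal hτH
      linarith
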